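/- Let a be the sequence defined over positive-integer indices by a[i] = F_{ν₂(i)+2} for i ≥ 1, where ν₂(i) is the exponent of the largest power of 2 dividing i. Then: (1) a avoids additive squares, i.e., there are no i ≥ 1 and n ≥ 1 with Σ_{k=i}^{i+n-1} a[k] = Σ_{k=i+n}^{i+2n-1} a[k]; and (2) a is the lexicographically least sequence over the positive integers of the form S(b) that avoids additive squares, where for a sequence b = b_0 b_1 b_2 ⋯ of positive integers, S(b) is the sequence with S(b)[i] = b[ν₂(i)] for i ≥ 1. In other words, if b is any sequence of positive integers such that S(b) avoids additive squares, then the sequence (F_{i+2})_{i≥0} is lexicographically less than or equal to b. -/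

import Mathlib

open Finset

/-- ε_j for the AP x, x+n, x+2n. -/
def epsq (x n j : ℕ) : ℤ :=
  (if 2^j ≤ (x+n) % 2^j + n % 2^j then 1 else 0)
  - (if 2^j ≤ x % 2^j + n % 2^j then 1 else 0)

/-- partial weighted sum of ε with Fibonacci weights -/
def psum (x n J : ℕ) : ℤ := ∑ j ∈ Ico 1 J, epsq x n j * Nat.fib j

lemma div2 {E r : ℕ} (hE : 0 < E) (hr : r < 2*E) :
    (r / E : ℕ) = if E ≤ r then 1 else 0 := by
  rcases Nat.lt_or_ge r E with h | h
  · rw [if_neg (by omega)]; exact Nat.div_eq_of_lt h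
  · rw [if_pos h]
    have := Nat.div_eq_of_lt_le (by omega : 1 * E ≤ r) (by omega : r < (1+1) * E)
    omega

lemma add_div_eq (E a b : ℕ) (hE : 0 < E) :
    (a + b) / E = a / E + b / E + (if E ≤ a % E + b % E then 1 else 0) := by
  have h1 := Nat.div_add_mod a E
  have h2 := Nat.div_add_mod b E
  have key : a + b = E * (a/E + b/E) + (a % E + b % E) := by ring_nf; omega
  rw [key, Nat.mul_add_div hE]
  have : (a % E + b % E) / E = if E ≤ a % E + b % E then 1 else 0 :=
    div2 hE (by have := Nat.mod_lt a hE; have := Nat.mod_lt b hE; omega)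
  omega

lemma epsq_eq_floors (x n j : ℕ) :
    ((x / 2^j : ℕ) : ℤ) + ((x+n+n) / 2^j : ℕ) - 2 * ((x+n) / 2^j : ℕ) = epsq x n j := by
  have hE : 0 < 2^j := pow_pos (by norm_num) _
  have h1 := add_div_eq (2^j) x n hE
  have h2 := add_div_eq (2^j) (x+n) n hE
  unfold epsq
  rw [h2, h1]
  push_cast
  split <;> split <;> push_cast <;> ring

lemma epsq_zero_of_big {x n j : ℕ} (h : x + n + n < 2^j) : epsq x n j = 0 := by
  unfold epsq
  rw [if_neg, if_neg]
  · norm_num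
  all_goals
    have h1 := Nat.mod_le x (2^j)
    have h2 := Nat.mod_le n (2^j)
    have h3 := Nat.mod_le (x+n) (2^j)
    omega

lemma epsq_zero_of_dvd {x n j : ℕ} (h : 2^j ∣ n) : epsq x n j = 0 := by
  have hE : 0 < 2^j := pow_pos (by norm_num) _
  unfold epsq
  have ht : n % 2^j = 0 := Nat.mod_eq_zero_of_dvd h
  have h1 := Nat.mod_lt (x+n) hE
  have h2 := Nat.mod_lt x hE
  rw [if_neg (by omega), if_neg (by omega)]
  norm_num

/-- partial sums of g ∘ ν₂ -/
lemma sum_val (g : ℕ → ℕ) (J : ℕ) : ∀ m : ℕ, m < 2^J →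
    ∑ k ∈ Ico 1 (m+1), (g (padicValNat 2 k) : ℤ)
      = ∑ j ∈ range J, (((m / 2^j : ℕ) : ℤ) - ((m / 2^(j+1) : ℕ) : ℤ)) * (g j : ℤ) := by
  intro m
  induction m with
  | zero => intro _; simp
  | succ m ih =>
    intro hm
    have hm' : m < 2^J := by omega
    rw [Finset.sum_Ico_succ_top (by omega), ih hm']
    have hv : ∀ j : ℕ, ((m+1) / 2^j : ℕ) = (m / 2^j : ℕ) + if 2^j ∣ (m+1) then 1 else 0 := by
      intro j; exact Nat.succ_div
    have hdvd : ∀ j : ℕ, (2^j ∣ (m+1)) ↔ j ≤ padicValNat 2 (m+1) := by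
      intro j; exact padicValNat_dvd_iff_le (by omega)
    set v := padicValNat 2 (m+1) with hvdef
    have hvJ : v < J := by
      have h2v : 2^v ≤ m+1 := Nat.le_of_dvd (by omega) ((hdvd v).mpr le_rfl)
      by_contra hc
      have : 2^J ≤ 2^v := Nat.pow_le_pow_right (by norm_num) (by omega)
      omega
    have key : ∀ j ∈ range J,
        (((m+1) / 2^j : ℕ) : ℤ) - (((m+1) / 2^(j+1) : ℕ) : ℤ) =
        ((m / 2^j : ℕ) : ℤ) - ((m / 2^(j+1) : ℕ) : ℤ) + (if j = v then 1 else 0) := by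
      intro j _
      rw [hv j, hv (j+1)]
      by_cases h1 : 2^j ∣ (m+1) <;> by_cases h2 : 2^(j+1) ∣ (m+1)
      · rw [if_pos h1, if_pos h2, if_neg]; · push_cast; ring
        · intro hjv; rw [hdvd] at h2; omega
      · rw [if_pos h1, if_neg h2, if_pos]; · push_cast; ring
        · rw [hdvd] at h1 h2; omega
      · exact absurd (dvd_trans (pow_dvd_pow 2 (by omega)) h2) h1
      · rw [if_neg h1, if_neg h2, if_neg]; · push_cast; ring
        · intro hjv; rw [hdvd] at h1; omega
    have expand : ∑ j ∈ range J, ((((m+1) / 2^j : ℕ) : ℤ) - (((m+1) / 2^(j+1) : ℕ) : ℤ)) * (g j : ℤ)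
        = ∑ j ∈ range J, ((((m / 2^j : ℕ) : ℤ) - ((m / 2^(j+1) : ℕ) : ℤ)) * (g j : ℤ)
            + (if j = v then (g j : ℤ) else 0)) := by
      refine Finset.sum_congr rfl (fun j hj => ?_)
      rw [key j hj]
      split <;> ring
    rw [expand, Finset.sum_add_distrib, Finset.sum_ite_eq' (range J) v (fun j => (g j : ℤ)),
      if_pos (Finset.mem_range.mpr hvJ)]

lemma abel_sum (D w : ℕ → ℤ) : ∀ J : ℕ,
    ∑ j ∈ range (J+1), (D j - D (j+1)) * w j
      = D 0 * w 0 + (∑ j ∈ Ico 1 (J+1), D j * (w j - w (j-1))) - D (J+1) * w J := by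
  intro J
  induction J with
  | zero => simp; ring
  | succ J ih =>
    rw [Finset.sum_range_succ, ih, Finset.sum_Ico_succ_top (by omega : 1 ≤ J+1)]
    simp only [Nat.add_sub_cancel]
    ring

/-- Central identity: difference of adjacent block sums as weighted ε-sum. -/
lemma central (g : ℕ → ℕ) (x n J : ℕ) (hJ : x + n + n < 2^(J+1)) :
    (∑ k ∈ Ico (x+1+n) (x+1+n+n), (g (padicValNat 2 k) : ℤ))
      - (∑ k ∈ Ico (x+1) (x+1+n), (g (padicValNat 2 k) : ℤ))
      = ∑ j ∈ Ico 1 (J+1), epsq x n j * ((g j : ℤ) - (g (j-1) : ℤ)) := by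
  have h1 : x < 2^(J+1) := by omega
  have h2 : x + n < 2^(J+1) := by omega
  have T1 := sum_val g (J+1) x h1
  have T2 := sum_val g (J+1) (x+n) h2
  have T3 := sum_val g (J+1) (x+n+n) hJ
  have split1 : ∑ k ∈ Ico 1 (x+1), (g (padicValNat 2 k) : ℤ)
      + ∑ k ∈ Ico (x+1) (x+1+n), (g (padicValNat 2 k) : ℤ)
      = ∑ k ∈ Ico 1 (x+n+1), (g (padicValNat 2 k) : ℤ) := by
    rw [show x+1+n = x+n+1 by ring,
      Finset.sum_Ico_consecutive _ (by omega : 1 ≤ x+1) (by omega : x+1 ≤ x+n+1)]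
  have split2 : ∑ k ∈ Ico 1 (x+n+1), (g (padicValNat 2 k) : ℤ)
      + ∑ k ∈ Ico (x+1+n) (x+1+n+n), (g (padicValNat 2 k) : ℤ)
      = ∑ k ∈ Ico 1 (x+n+n+1), (g (padicValNat 2 k) : ℤ) := by
    rw [show x+1+n+n = x+n+n+1 by ring, show x+1+n = x+n+1 by ring,
      Finset.sum_Ico_consecutive _ (by omega : 1 ≤ x+n+1) (by omega : x+n+1 ≤ x+n+n+1)]
  -- difference = T3 + T1 - 2*T2
  have key : (∑ k ∈ Ico (x+1+n) (x+1+n+n), (g (padicValNat 2 k) : ℤ))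
      - (∑ k ∈ Ico (x+1) (x+1+n), (g (padicValNat 2 k) : ℤ))
      = ∑ j ∈ range (J+1),
          ((((x / 2^j : ℕ) : ℤ) + ((x+n+n) / 2^j : ℕ) - 2 * ((x+n) / 2^j : ℕ))
            - (((x / 2^(j+1) : ℕ) : ℤ) + ((x+n+n) / 2^(j+1) : ℕ) - 2 * ((x+n) / 2^(j+1) : ℕ)))
          * (g j : ℤ) := by
    have e1 : (∑ k ∈ Ico (x+1+n) (x+1+n+n), (g (padicValNat 2 k) : ℤ))
        - (∑ k ∈ Ico (x+1) (x+1+n), (g (padicValNat 2 k) : ℤ))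
        = (∑ k ∈ Ico 1 (x+n+n+1), (g (padicValNat 2 k) : ℤ))
          + (∑ k ∈ Ico 1 (x+1), (g (padicValNat 2 k) : ℤ))
          - 2 * (∑ k ∈ Ico 1 (x+n+1), (g (padicValNat 2 k) : ℤ)) := by
      omega
    rw [e1, T1, T2, T3, ← Finset.sum_add_distrib, Finset.mul_sum, ← Finset.sum_sub_distrib]
    refine Finset.sum_congr rfl (fun j hj => ?_)
    push_cast
    ring
  rw [key]
  have D0 : ((x / 2^0 : ℕ) : ℤ) + ((x+n+n) / 2^0 : ℕ) - 2 * ((x+n) / 2^0 : ℕ) = 0 := by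
    simp; push_cast; ring
  have DJ : ((x / 2^(J+1) : ℕ) : ℤ) + ((x+n+n) / 2^(J+1) : ℕ) - 2 * ((x+n) / 2^(J+1) : ℕ)
      = epsq x n (J+1) := epsq_eq_floors x n (J+1)
  rw [abel_sum (fun j => ((x / 2^j : ℕ) : ℤ) + ((x+n+n) / 2^j : ℕ) - 2 * ((x+n) / 2^j : ℕ))
    (fun j => (g j : ℤ)) J]
  rw [D0, DJ, epsq_zero_of_big (by omega : x + n + n < 2^(J+1))]
  have : ∀ j ∈ Ico 1 (J+1),
      (((x / 2^j : ℕ) : ℤ) + ((x+n+n) / 2^j : ℕ) - 2 * ((x+n) / 2^j : ℕ)) * ((g j : ℤ) - (g (j-1) : ℤ))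
      = epsq x n j * ((g j : ℤ) - (g (j-1) : ℤ)) := by
    intro j _; rw [epsq_eq_floors]
  rw [Finset.sum_congr rfl this]
  ring

def Chi (x n j : ℕ) : Prop := 2^j ≤ (x+n) % 2^j + n % 2^j
def Psi (x n j : ℕ) : Prop := 2^j ≤ x % 2^j + n % 2^j

instance (x n j : ℕ) : Decidable (Chi x n j) := by unfold Chi; infer_instance
instance (x n j : ℕ) : Decidable (Psi x n j) := by unfold Psi; infer_instance

lemma epsq_eq_chi_psi (x n j : ℕ) :
    epsq x n j = (if Chi x n j then 1 else 0) - (if Psi x n j then 1 else 0) := rfl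

lemma step_forbidden (x n j : ℕ) :
    ((Chi x n (j+1) ∧ ¬ Psi x n (j+1)) → ¬(Psi x n j ∧ ¬ Chi x n j)) ∧
    ((Psi x n (j+1) ∧ ¬ Chi x n (j+1)) → ¬(Chi x n j ∧ ¬ Psi x n j)) ∧
    ((Chi x n (j+1) ∧ Psi x n (j+1)) → (Chi x n j ∨ Psi x n j)) ∧
    ((¬ Chi x n (j+1) ∧ ¬ Psi x n (j+1)) → ¬(Chi x n j ∧ Psi x n j)) := by
  have hE : 0 < 2^j := pow_pos two_pos _
  have hp : (2:ℕ)^(j+1) = 2^j * 2 := pow_succ 2 j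
  simp only [Chi, Psi, hp]
  set E := 2^j with hEdef
  have hxE := Nat.mod_lt x hE
  have hnE := Nat.mod_lt n hE
  have hx2 : x % (E*2) = x % E + E * (x / E % 2) := Nat.mod_mul
  have hn2 : n % (E*2) = n % E + E * (n / E % 2) := Nat.mod_mul
  have hr1 : (x+n) % E = (x % E + n % E) % E := Nat.add_mod x n E
  have hr2 : (x+n) % (E*2) = (x % (E*2) + n % (E*2)) % (E*2) := Nat.add_mod x n (E*2)
  have hu : x / E % 2 = 0 ∨ x / E % 2 = 1 := by omega
  have hw : n / E % 2 = 0 ∨ n / E % 2 = 1 := by omega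
  have q1 : (x % E + n % E) % E =
      if E ≤ x % E + n % E then x % E + n % E - E else x % E + n % E := by
    split
    · rw [Nat.mod_eq_sub_mod ‹_›]; exact Nat.mod_eq_of_lt (by omega)
    · exact Nat.mod_eq_of_lt (by omega)
  have hb2 : x % (E*2) + n % (E*2) < 2*(E*2) := by
    have := Nat.mod_lt x (show 0 < E*2 by omega)
    have := Nat.mod_lt n (show 0 < E*2 by omega)
    omega
  have q2 : (x % (E*2) + n % (E*2)) % (E*2) =
      if E*2 ≤ x % (E*2) + n % (E*2) then x % (E*2) + n % (E*2) - E*2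
      else x % (E*2) + n % (E*2) := by
    split
    · rw [Nat.mod_eq_sub_mod ‹_›]; exact Nat.mod_eq_of_lt (by omega)
    · exact Nat.mod_eq_of_lt (by omega)
  rcases hu with hu | hu <;> rcases hw with hw | hw <;>
    rw [hu] at hx2 <;> rw [hw] at hn2 <;>
    [skip; skip; skip; skip] <;>
    (rw [q1] at hr1; rw [q2] at hr2) <;>
    split at hr1 <;> split at hr2 <;> omega

def SqInv (x n j : ℕ) : Prop :=
  ((Chi x n j ∧ ¬ Psi x n j) →
    (1 - (Nat.fib j : ℤ) ≤ psum x n j ∧ psum x n j ≤ (Nat.fib (j+1) : ℤ) - 1)) ∧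
  ((Psi x n j ∧ ¬ Chi x n j) →
    (1 - (Nat.fib (j+1) : ℤ) ≤ psum x n j ∧ psum x n j ≤ (Nat.fib j : ℤ) - 1)) ∧
  ((Chi x n j ∧ Psi x n j) →
    (1 - (Nat.fib (j+1) : ℤ) ≤ psum x n j ∧ psum x n j ≤ (Nat.fib (j+1) : ℤ) - 1)) ∧
  ((¬ Chi x n j ∧ ¬ Psi x n j) →
    (psum x n j ≠ 0 ∧ 1 - (Nat.fib (j+1) : ℤ) ≤ psum x n j ∧ psum x n j ≤ (Nat.fib (j+1) : ℤ) - 1))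

lemma inv_step (x n j : ℕ) (hj : 1 ≤ j) (h : SqInv x n j) : SqInv x n (j+1) := by
  obtain ⟨s1, s2, s3, s4⟩ := step_forbidden x n j
  have hsum : psum x n (j+1) = psum x n j + epsq x n j * Nat.fib j :=
    Finset.sum_Ico_succ_top hj _
  have hfib : (Nat.fib (j+2) : ℤ) = Nat.fib j + Nat.fib (j+1) := by
    rw [Nat.fib_add_two]; push_cast; ring
  have hfib1 : 1 ≤ (Nat.fib j : ℤ) := by
    have := Nat.fib_pos.mpr (show 0 < j by omega); exact_mod_cast this
  have hfib2 : (Nat.fib j : ℤ) ≤ (Nat.fib (j+1) : ℤ) := by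
    exact_mod_cast Nat.fib_le_fib_succ
  rw [epsq_eq_chi_psi] at hsum
  unfold SqInv at h ⊢
  by_cases c1 : Chi x n j <;> by_cases p1 : Psi x n j <;>
    by_cases c2 : Chi x n (j+1) <;> by_cases p2 : Psi x n (j+1) <;>
    simp only [c1, p1, c2, p2, if_true, if_false, not_true, not_false_iff, true_and, false_and,
      and_true, and_false, true_implies, false_implies, and_self, not_false_eq_true,
      not_true_eq_false, if_pos, if_neg, ite_true, ite_false] at h hsum ⊢ <;>
    first
      | (exact (s2 ⟨p2, c2⟩ ⟨c1, p1⟩).elim)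
      | (exact (s1 ⟨c2, p2⟩ ⟨p1, c1⟩).elim)
      | (exact ((s3 ⟨c2, p2⟩).elim c1 p1).elim)
      | (exact (s4 ⟨c2, p2⟩ ⟨c1, p1⟩).elim)
      | (rw [show (Nat.fib (j+1+1) : ℤ) = Nat.fib j + Nat.fib (j+1) from hfib]; omega)

lemma nmod_base {n : ℕ} (hn : 1 ≤ n) : n % 2^(padicValNat 2 n + 1) = 2^(padicValNat 2 n) := by
  set v := padicValNat 2 n with hv
  have d1 : 2^v ∣ n := pow_padicValNat_dvd
  have d2 : ¬ 2^(v+1) ∣ n := pow_succ_padicValNat_not_dvd (by omega)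
  have hdvd : (2:ℕ)^v ∣ 2^(v+1) := pow_dvd_pow 2 (by omega)
  have d3 : 2^v ∣ n % 2^(v+1) := (Nat.dvd_mod_iff hdvd).mpr d1
  have hlt : n % 2^(v+1) < 2^(v+1) := Nat.mod_lt _ (pow_pos two_pos _)
  have hp : (2:ℕ)^(v+1) = 2^v * 2 := pow_succ 2 v
  obtain ⟨c, hc⟩ := d3
  have hc2 : c < 2 := Nat.lt_of_mul_lt_mul_left (a := 2^v) (by omega)
  interval_cases c
  · exfalso
    exact d2 (Nat.dvd_of_mod_eq_zero (by omega))
  · omega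

lemma base_inv (x n : ℕ) (hn : 1 ≤ n) : SqInv x n (padicValNat 2 n + 1) := by
  set v := padicValNat 2 n with hv
  have hE : 0 < 2^v := pow_pos two_pos _
  have hp : (2:ℕ)^(v+1) = 2^v * 2 := pow_succ 2 v
  have ht : n % 2^(v+1) = 2^v := nmod_base hn
  have hs : x % 2^(v+1) < 2^(v+1) := Nat.mod_lt _ (by omega)
  have hr : (x+n) % 2^(v+1) = (x % 2^(v+1) + 2^v) % 2^(v+1) := by
    rw [Nat.add_mod, ht]
  have hq : (x % 2^(v+1) + 2^v) % 2^(v+1) =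
      if 2^(v+1) ≤ x % 2^(v+1) + 2^v then x % 2^(v+1) + 2^v - 2^(v+1)
      else x % 2^(v+1) + 2^v := by
    split
    · rw [Nat.mod_eq_sub_mod ‹_›]; exact Nat.mod_eq_of_lt (by omega)
    · exact Nat.mod_eq_of_lt (by omega)
  -- psum is zero at the base level
  have hzero : psum x n (v+1) = 0 := by
    unfold psum
    apply Finset.sum_eq_zero
    intro j hj
    rw [Finset.mem_Ico] at hj
    have : (2:ℕ)^j ∣ n := dvd_trans (pow_dvd_pow 2 (by omega : j ≤ v))
      pow_padicValNat_dvd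
    rw [epsq_zero_of_dvd this, zero_mul]
  have state : (Chi x n (v+1) ∧ ¬ Psi x n (v+1)) ∨ (Psi x n (v+1) ∧ ¬ Chi x n (v+1)) := by
    unfold Chi Psi
    rw [ht, hr, hq]
    split <;> omega
  have hfib1 : 1 ≤ (Nat.fib (v+1) : ℤ) := by
    have := Nat.fib_pos.mpr (show 0 < v+1 by omega); exact_mod_cast this
  have hfib2 : (Nat.fib (v+1) : ℤ) ≤ (Nat.fib (v+1+1) : ℤ) := by exact_mod_cast Nat.fib_le_fib_succ
  unfold SqInv
  rw [hzero]
  rcases state with ⟨hc, hp'⟩ | ⟨hp', hc⟩ <;>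
    refine ⟨?_, ?_, ?_, ?_⟩ <;> intro hh <;> first | omega | (exact absurd hh (by tauto))

lemma main_inv (x n : ℕ) (hn : 1 ≤ n) :
    ∀ j, padicValNat 2 n + 1 ≤ j → SqInv x n j := by
  intro j
  induction j with
  | zero => omega
  | succ j ih =>
    intro hj
    rcases Nat.lt_or_ge j (padicValNat 2 n + 1) with h | h
    · have : j = padicValNat 2 n := by omega
      rw [show j + 1 = padicValNat 2 n + 1 by omega]
      exact base_inv x n hn
    · exact inv_step x n j (by omega) (ih h)

theorem part_one : ¬ ∃ i : ℕ, 1 ≤ i ∧ ∃ n : ℕ, 1 ≤ n ∧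
    ∑ k ∈ Finset.Ico i (i + n), Nat.fib (padicValNat 2 k + 2) =
      ∑ k ∈ Finset.Ico (i + n) (i + 2 * n), Nat.fib (padicValNat 2 k + 2) := by
  rintro ⟨i, hi, n, hn, heq⟩
  obtain ⟨x, rfl⟩ : ∃ x, i = x + 1 := ⟨i - 1, by omega⟩
  set J := x + n + n with hJ
  have hbig : x + n + n < 2^(J+1) := by
    have := Nat.lt_two_pow_self (n := J)
    have : (2:ℕ)^J ≤ 2^(J+1) := Nat.pow_le_pow_right (by norm_num) (by omega)
    omega
  have hcen := central (fun j => Nat.fib (j+2)) x n J hbig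
  -- turn the hypothesis into the ℤ statement
  have heqz : (∑ k ∈ Finset.Ico (x+1+n) (x+1+n+n), ((Nat.fib (padicValNat 2 k + 2) : ℕ) : ℤ))
      - (∑ k ∈ Finset.Ico (x+1) (x+1+n), ((Nat.fib (padicValNat 2 k + 2) : ℕ) : ℤ)) = 0 := by
    have hc := congrArg (fun t : ℕ => (t : ℤ)) heq
    push_cast at hc
    rw [show x+1+n+n = x+1+2*n by ring, ← hc, sub_self]
  rw [heqz] at hcen
  have hfibw : ∀ j ∈ Finset.Ico 1 (J+1),
      epsq x n j * ((Nat.fib (j+2) : ℤ) - (Nat.fib (j-1+2) : ℤ))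
        = epsq x n j * (Nat.fib j : ℤ) := by
    intro j hj
    rw [Finset.mem_Ico] at hj
    have h1 : j - 1 + 2 = j + 1 := by omega
    have h2 : (Nat.fib (j+2) : ℤ) = Nat.fib j + Nat.fib (j+1) := by
      rw [Nat.fib_add_two]; push_cast; ring
    rw [h1, h2]; ring
  rw [Finset.sum_congr rfl hfibw] at hcen
  have hpsum : psum x n (J+1) = 0 := by rw [psum, ← hcen]
  -- but the invariant says psum ≠ 0
  have hv : padicValNat 2 n + 1 ≤ J + 1 := by
    have hd : (2:ℕ)^(padicValNat 2 n) ∣ n := pow_padicValNat_dvd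
    have h1 : 2^(padicValNat 2 n) ≤ n := Nat.le_of_dvd (by omega) hd
    have h2 := Nat.lt_two_pow_self (n := padicValNat 2 n)
    omega
  have hinv := main_inv x n hn (J+1) hv
  have hnochi : ¬ Chi x n (J+1) := by
    unfold Chi
    have := Nat.mod_le (x+n) (2^(J+1))
    have := Nat.mod_le n (2^(J+1))
    have h1 : (x+n) % 2^(J+1) = x+n := Nat.mod_eq_of_lt (by omega)
    have h2 : n % 2^(J+1) = n := Nat.mod_eq_of_lt (by omega)
    omega
  have hnopsi : ¬ Psi x n (J+1) := by
    unfold Psi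
    have h1 : x % 2^(J+1) = x := Nat.mod_eq_of_lt (by omega)
    have h2 : n % 2^(J+1) = n := Nat.mod_eq_of_lt (by omega)
    omega
  exact (hinv.2.2.2 ⟨hnochi, hnopsi⟩).1 hpsum

lemma psum_succ (x n k : ℕ) :
    psum x n (k+1) = psum x n k + epsq x n k * Nat.fib k := by
  rcases k with _ | k
  · simp [psum]
  · exact Finset.sum_Ico_succ_top (by omega) _

lemma epsq_congr {x n x' n' : ℕ} (K : ℕ) (hx : x' % 2^K = x % 2^K)
    (hn : n' % 2^K = n % 2^K) {j : ℕ} (hj : j ≤ K) : epsq x' n' j = epsq x n j := by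
  have hd : (2:ℕ)^j ∣ 2^K := pow_dvd_pow 2 hj
  have e1 : x' % 2^j = x % 2^j := by
    rw [← Nat.mod_mod_of_dvd x' hd, ← Nat.mod_mod_of_dvd x hd, hx]
  have e2 : n' % 2^j = n % 2^j := by
    rw [← Nat.mod_mod_of_dvd n' hd, ← Nat.mod_mod_of_dvd n hd, hn]
  have e3 : (x'+n') % 2^j = (x+n) % 2^j := by
    rw [Nat.add_mod x' n', Nat.add_mod x n, e1, e2]
  unfold epsq
  rw [e1, e2, e3]

lemma psum_congr {x n x' n' : ℕ} (K : ℕ) (hx : x' % 2^K = x % 2^K)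
    (hn : n' % 2^K = n % 2^K) : psum x' n' K = psum x n K := by
  unfold psum
  refine Finset.sum_congr rfl (fun j hj => ?_)
  rw [Finset.mem_Ico] at hj
  rw [epsq_congr K hx hn (by omega : j ≤ K)]

lemma psum_zero (k : ℕ) : psum 0 0 k = 0 := by
  unfold psum
  refine Finset.sum_eq_zero (fun j hj => ?_)
  rw [Finset.mem_Ico] at hj
  rw [epsq_zero_of_big (by positivity), zero_mul]

lemma constr (k : ℕ) :
    (∀ v : ℤ, 1 - (Nat.fib k : ℤ) ≤ v → v ≤ (Nat.fib (k+1) : ℤ) - 1 →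
      ∃ x n : ℕ, x + n < 2^k ∧ 2^k ≤ x + 2*n ∧ x + 2*n < 2^(k+1) ∧ psum x n k = v) ∧
    (∀ v : ℤ, 1 - (Nat.fib (k+1) : ℤ) ≤ v → v ≤ (Nat.fib k : ℤ) - 1 →
      ∃ x n : ℕ, x < 2^k ∧ n < 2^k ∧ 2^k ≤ x + n ∧ x + 2*n < 2^(k+1) ∧ psum x n k = v) ∧
    (∀ v : ℤ, 1 - (Nat.fib (k+1) : ℤ) ≤ v → v ≤ (Nat.fib (k+1) : ℤ) - 1 →
      ∃ x n : ℕ, x + 2*n < 2^k ∧ psum x n k = v) := by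
  induction k with
  | zero =>
    refine ⟨fun v h1 h2 => absurd (h1.trans h2) (by norm_num),
      fun v h1 h2 => absurd (h1.trans h2) (by norm_num),
      fun v h1 h2 => ⟨0, 0, by norm_num, ?_⟩⟩
    have : v = 0 := by norm_num at h1 h2; omega
    rw [this, psum_zero]
  | succ k ih =>
    obtain ⟨c10, c01, c00⟩ := ih
    have hp1 : (2:ℕ)^(k+1) = 2^k * 2 := pow_succ 2 k
    have hp2 : (2:ℕ)^(k+1+1) = 2^k * 4 := by rw [pow_succ, hp1]; ring
    have hE : 0 < (2:ℕ)^k := pow_pos two_pos _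
    have hfib : (Nat.fib (k+1+1) : ℤ) = Nat.fib k + Nat.fib (k+1) := by
      rw [Nat.fib_add_two]; push_cast; ring
    have hfib0 : 0 ≤ (Nat.fib k : ℤ) := by positivity
    have hfib1 : 1 ≤ (Nat.fib (k+1) : ℤ) := by
      have := Nat.fib_pos.mpr (show 0 < k+1 by omega); exact_mod_cast this
    have hfible : (Nat.fib k : ℤ) ≤ (Nat.fib (k+1) : ℤ) := by exact_mod_cast Nat.fib_le_fib_succ
    refine ⟨?_, ?_, ?_⟩
    · -- state 10 at k+1
      intro v h1 h2
      rcases le_or_gt 1 v with hv | hv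
      · obtain ⟨x, n, b1, b2, b3, b4⟩ := c10 (v - Nat.fib k) (by omega) (by omega)
        refine ⟨x + 2^k, n, by omega, by omega, by omega, ?_⟩
        have hxm : (x + 2^k) % 2^k = x % 2^k := Nat.add_mod_right x (2^k)
        rw [psum_succ, psum_congr k hxm rfl, b4]
        have hx' : x % 2^k = x := Nat.mod_eq_of_lt (by omega)
        have hn' : n % 2^k = n := Nat.mod_eq_of_lt (by omega)
        have hxn' : (x+n) % 2^k = x+n := Nat.mod_eq_of_lt (by omega)
        have hchi : Chi x n k := by unfold Chi; rw [hxn', hn']; omega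
        have hpsi : ¬ Psi x n k := by unfold Psi; rw [hx', hn']; omega
        have heps : epsq (x + 2^k) n k = epsq x n k := epsq_congr k hxm rfl le_rfl
        rw [heps, epsq_eq_chi_psi, if_pos hchi, if_neg hpsi]
        ring
      · obtain ⟨x, n, b1, b2⟩ := c00 v (by omega) (by omega)
        refine ⟨x, n + 2^k, by omega, by omega, by omega, ?_⟩
        have hnm : (n + 2^k) % 2^k = n % 2^k := Nat.add_mod_right n (2^k)
        rw [psum_succ, psum_congr k rfl hnm, b2]
        have heps : epsq x (n + 2^k) k = epsq x n k := epsq_congr k rfl hnm le_rfl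
        rw [heps, epsq_zero_of_big (by omega)]
        ring
    · -- state 01 at k+1
      intro v h1 h2
      rcases le_or_gt v (-1) with hv | hv
      · obtain ⟨x, n, b1, b2, b3, b4, b5⟩ := c01 (v + Nat.fib k) (by omega) (by omega)
        refine ⟨x + 2^k, n, by omega, by omega, by omega, by omega, ?_⟩
        have hxm : (x + 2^k) % 2^k = x % 2^k := Nat.add_mod_right x (2^k)
        rw [psum_succ, psum_congr k hxm rfl, b5]
        have hx' : x % 2^k = x := Nat.mod_eq_of_lt (by omega)
        have hn' : n % 2^k = n := Nat.mod_eq_of_lt (by omega)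
        have hxn' : (x+n) % 2^k = x+n - 2^k := by
          rw [Nat.mod_eq_sub_mod (by omega)]
          exact Nat.mod_eq_of_lt (by omega)
        have hchi : ¬ Chi x n k := by unfold Chi; rw [hxn', hn']; omega
        have hpsi : Psi x n k := by unfold Psi; rw [hx', hn']; omega
        have heps : epsq (x + 2^k) n k = epsq x n k := epsq_congr k hxm rfl le_rfl
        rw [heps, epsq_eq_chi_psi, if_neg hchi, if_pos hpsi]
        ring
      · obtain ⟨x, n, b1, b2⟩ := c00 v (by omega) (by omega)
        refine ⟨x + 2^k, n + 2^k, by omega, by omega, by omega, by omega, ?_⟩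
        have hxm : (x + 2^k) % 2^k = x % 2^k := Nat.add_mod_right x (2^k)
        have hnm : (n + 2^k) % 2^k = n % 2^k := Nat.add_mod_right n (2^k)
        rw [psum_succ, psum_congr k hxm hnm, b2]
        have heps : epsq (x + 2^k) (n + 2^k) k = epsq x n k := epsq_congr k hxm hnm le_rfl
        rw [heps, epsq_zero_of_big (by omega)]
        ring
    · -- state 00 at k+1
      intro v h1 h2
      rcases lt_trichotomy v 0 with hv | hv | hv
      · obtain ⟨x, n, b1, b2, b3, b4, b5⟩ := c01 (v + Nat.fib k) (by omega) (by omega)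
        refine ⟨x, n, by omega, ?_⟩
        rw [psum_succ, b5]
        have hx' : x % 2^k = x := Nat.mod_eq_of_lt (by omega)
        have hn' : n % 2^k = n := Nat.mod_eq_of_lt (by omega)
        have hxn' : (x+n) % 2^k = x+n - 2^k := by
          rw [Nat.mod_eq_sub_mod (by omega)]
          exact Nat.mod_eq_of_lt (by omega)
        have hchi : ¬ Chi x n k := by unfold Chi; rw [hxn', hn']; omega
        have hpsi : Psi x n k := by unfold Psi; rw [hx', hn']; omega
        rw [epsq_eq_chi_psi, if_neg hchi, if_pos hpsi]
        ring
      · exact ⟨0, 0, by positivity, by rw [hv, psum_zero]⟩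
      · obtain ⟨x, n, b1, b2, b3, b4⟩ := c10 (v - Nat.fib k) (by omega) (by omega)
        refine ⟨x, n, by omega, ?_⟩
        rw [psum_succ, b4]
        have hx' : x % 2^k = x := Nat.mod_eq_of_lt (by omega)
        have hn' : n % 2^k = n := Nat.mod_eq_of_lt (by omega)
        have hxn' : (x+n) % 2^k = x+n := Nat.mod_eq_of_lt (by omega)
        have hchi : Chi x n k := by unfold Chi; rw [hxn', hn']; omega
        have hpsi : ¬ Psi x n k := by unfold Psi; rw [hx', hn']; omega
        rw [epsq_eq_chi_psi, if_pos hchi, if_neg hpsi]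
        ring

theorem part_two (b : ℕ → ℕ) (hb : ∀ i : ℕ, 1 ≤ b i)
    (hsq : ¬ ∃ i : ℕ, 1 ≤ i ∧ ∃ n : ℕ, 1 ≤ n ∧
      ∑ k ∈ Finset.Ico i (i + n), b (padicValNat 2 k) =
        ∑ k ∈ Finset.Ico (i + n) (i + 2 * n), b (padicValNat 2 k)) :
    ((∀ i : ℕ, Nat.fib (i + 2) = b i) ∨
      ∃ k : ℕ, (∀ j < k, Nat.fib (j + 2) = b j) ∧ Nat.fib (k + 2) < b k) := by
  by_cases hall : ∀ i : ℕ, Nat.fib (i + 2) = b i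
  · exact Or.inl hall
  right
  push_neg at hall
  classical
  set k := Nat.find hall with hkdef
  have hk : Nat.fib (k+2) ≠ b k := Nat.find_spec hall
  have hmin : ∀ j < k, Nat.fib (j+2) = b j := by
    intro j hj
    have h' := Nat.find_min hall (show j < Nat.find hall from hkdef ▸ hj)
    exact not_not.mp h'
  refine ⟨k, hmin, ?_⟩
  by_contra hgt
  push_neg at hgt
  -- so b k < fib (k+2)
  have hblt : b k < Nat.fib (k+2) := by omega
  have hb1 : 1 ≤ b k := hb k
  have hk1 : 1 ≤ k := by
    by_contra hk0
    have : k = 0 := by omega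
    rw [this] at hblt
    have := hb 0
    simp [Nat.fib] at hblt
    omega
  have hfib : (Nat.fib (k+2) : ℤ) = Nat.fib k + Nat.fib (k+1) := by
    rw [Nat.fib_add_two]; push_cast; ring
  set v : ℤ := (Nat.fib (k+1) : ℤ) - b k with hvdef
  obtain ⟨x, n, c1, c2, c3, c4⟩ := (constr k).1 v
    (by rw [hvdef]; omega)
    (by rw [hvdef]; have := hb k; omega)
  have hn1 : 1 ≤ n := by omega
  apply hsq
  refine ⟨x+1, by omega, n, hn1, ?_⟩
  -- use the central identity
  have hcen := central b x n k (by omega)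
  -- evaluate the RHS
  have hx' : x % 2^k = x := Nat.mod_eq_of_lt (by omega)
  have hn' : n % 2^k = n := Nat.mod_eq_of_lt (by omega)
  have hxn' : (x+n) % 2^k = x+n := Nat.mod_eq_of_lt (by omega)
  have hchi : Chi x n k := by unfold Chi; rw [hxn', hn']; omega
  have hpsi : ¬ Psi x n k := by unfold Psi; rw [hx', hn']; omega
  have hepsk : epsq x n k = 1 := by
    rw [epsq_eq_chi_psi, if_pos hchi, if_neg hpsi]; ring
  have hsplit : ∑ j ∈ Finset.Ico 1 (k+1), epsq x n j * ((b j : ℤ) - (b (j-1) : ℤ))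
      = (∑ j ∈ Finset.Ico 1 k, epsq x n j * ((b j : ℤ) - (b (j-1) : ℤ)))
        + epsq x n k * ((b k : ℤ) - (b (k-1) : ℤ)) :=
    Finset.sum_Ico_succ_top (by omega) _
  have hlow : ∑ j ∈ Finset.Ico 1 k, epsq x n j * ((b j : ℤ) - (b (j-1) : ℤ)) = psum x n k := by
    unfold psum
    refine Finset.sum_congr rfl (fun j hj => ?_)
    rw [Finset.mem_Ico] at hj
    have e1 : b j = Nat.fib (j+2) := (hmin j (by omega)).symm
    have e2 : b (j-1) = Nat.fib (j+1) := by
      rw [← hmin (j-1) (by omega), show j-1+2 = j+1 by omega]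
    rw [e1, e2]
    have : (Nat.fib (j+2) : ℤ) = Nat.fib j + Nat.fib (j+1) := by
      rw [Nat.fib_add_two]; push_cast; ring
    rw [this]
    ring
  have htop : epsq x n k * ((b k : ℤ) - (b (k-1) : ℤ)) = -v := by
    have e2 : b (k-1) = Nat.fib (k+1) := by
      rw [← hmin (k-1) (by omega), show k-1+2 = k+1 by omega]
    rw [hepsk, e2, hvdef]
    ring
  rw [hsplit, hlow, htop, c4] at hcen
  have hzz : (∑ j ∈ Finset.Ico (x+1+n) (x+1+n+n), (b (padicValNat 2 j) : ℤ))
      = ∑ j ∈ Finset.Ico (x+1) (x+1+n), (b (padicValNat 2 j) : ℤ) := by omega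
  have : (∑ j ∈ Finset.Ico (x+1) (x+1+n), b (padicValNat 2 j))
      = ∑ j ∈ Finset.Ico (x+1+n) (x+1+n+n), b (padicValNat 2 j) := by
    exact_mod_cast hzz.symm
  rw [show x+1+n = x+1+n from rfl] at this
  rw [show (x+1) + 2*n = x+1+n+n by ring]
  exact this


/-- The sequence a with a[i] = F_{ν₂(i)+2} for i ≥ 1 avoids additive squares,
and it is the lexicographically least sequence of the form S(b), over sequences
b of positive integers, that avoids additive squares: if S(b) avoids additive
squares then (F_{i+2})_{i≥0} ≤ b lexicographically. -/
theorem lexLeast_additive_square_avoidance :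
    (¬ ∃ i : ℕ, 1 ≤ i ∧ ∃ n : ℕ, 1 ≤ n ∧
      ∑ k ∈ Finset.Ico i (i + n), Nat.fib (padicValNat 2 k + 2) =
        ∑ k ∈ Finset.Ico (i + n) (i + 2 * n), Nat.fib (padicValNat 2 k + 2)) ∧
    (∀ b : ℕ → ℕ, (∀ i : ℕ, 1 ≤ b i) →
      (¬ ∃ i : ℕ, 1 ≤ i ∧ ∃ n : ℕ, 1 ≤ n ∧
        ∑ k ∈ Finset.Ico i (i + n), b (padicValNat 2 k) =
          ∑ k ∈ Finset.Ico (i + n) (i + 2 * n), b (padicValNat 2 k)) →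
      ((∀ i : ℕ, Nat.fib (i + 2) = b i) ∨
        ∃ k : ℕ, (∀ j < k, Nat.fib (j + 2) = b j) ∧ Nat.fib (k + 2) < b k)) :=
  ⟨part_one, part_two⟩
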